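/- Let C(p) = S(Gp) − S(p) + E_p[f]. For any convex subset V of the probability simplex, any minimizer q of C over V, and any p ∈ V, one has C(p) − C(q) ≥ D(p‖q) − D(Gp‖Gq). -/

import Mathlib

open Finset Real

def isDist {X : Type*} [Fintype X] (p : X → ℝ) : Prop :=
  (∀ x, 0 ≤ p x) ∧ ∑ x, p x = 1

def isStoch {X : Type*} [Fintype X] (G : X → X → ℝ) : Prop :=
  (∀ y x, 0 ≤ G y x) ∧ ∀ x, ∑ y, G y x = 1

def push {X : Type*} [Fintype X] (G : X → X → ℝ) (p : X → ℝ) : X → ℝ :=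
  fun y => ∑ x, G y x * p x

noncomputable def KL {X : Type*} [Fintype X] (p q : X → ℝ) : ℝ :=
  ∑ x, p x * Real.log (p x / q x)

noncomputable def Ent {X : Type*} [Fintype X] (p : X → ℝ) : ℝ :=
  -∑ x, p x * Real.log (p x)

noncomputable def cost {X : Type*} [Fintype X] (G : X → X → ℝ) (f : X → ℝ) (p : X → ℝ) : ℝ :=
  Ent (push G p) - Ent p + ∑ x, p x * f x

/-- for any convex subset `V` of the simplex, a minimizer `q` of the
cost over `V`, and any `p ∈ V`, the excess cost is at least the KL drop. -/
lemma ptwise (t a b : ℝ) (ht : 0 < t) (ht1 : t ≤ 1) (ha : 0 ≤ a) (hb : 0 ≤ b) :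
    (a + t*(b-a)) * Real.log (a + t*(b-a)) - a * Real.log a
      - (a + t*(b-a)) * Real.log ((a + t*(b-a))/a)
    = t*(b*Real.log b - a*Real.log a - b*Real.log (b/a))
      + (if a = 0 then t*Real.log t*b else 0) := by
  rcases ha.eq_or_lt with h0 | h0
  · subst h0
    simp only [if_pos rfl, if_true, zero_add, sub_zero, mul_zero, Real.log_zero, div_zero,
      zero_mul]
    rcases hb.eq_or_lt with hb0 | hb0
    · simp [← hb0]
    · rw [Real.log_mul ht.ne' hb0.ne']; ring
  · have key : ∀ c : ℝ, 0 ≤ c → c * Real.log c - c * Real.log (c / a) = c * Real.log a := by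
      intro c hc
      rcases hc.eq_or_lt with h | h
      · simp [← h]
      · rw [Real.log_div h.ne' h0.ne']; ring
    have h1 := key (a + t*(b-a)) (by nlinarith)
    have h2 := key b hb
    rw [if_neg h0.ne']
    nlinarith [h1, h2]

lemma sum_identity {X : Type*} [Fintype X] (t : ℝ) (a b : X → ℝ)
    (ht : 0 < t) (ht1 : t ≤ 1) (ha : ∀ x, 0 ≤ a x) (hb : ∀ x, 0 ≤ b x) :
    (∑ x, (a x + t*(b x - a x)) * Real.log (a x + t*(b x - a x)))
      - (∑ x, a x * Real.log (a x)) - KL (fun x => a x + t*(b x - a x)) a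
    = t*((∑ x, b x * Real.log (b x)) - (∑ x, a x * Real.log (a x)) - KL b a)
      + t * Real.log t * (∑ x, if a x = 0 then b x else 0) := by
  simp only [KL, ← Finset.sum_sub_distrib, Finset.mul_sum, ← Finset.sum_add_distrib]
  refine Finset.sum_congr rfl fun x _ => ?_
  have := ptwise t (a x) (b x) ht ht1 (ha x) (hb x)
  rcases eq_or_ne (a x) 0 with h | h <;> simp [h] at this ⊢ <;> linarith

lemma push_linear {X : Type*} [Fintype X] (G : X → X → ℝ) (q p : X → ℝ) (t : ℝ) :
    push G (fun x => q x + t*(p x - q x))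
      = fun y => push G q y + t*(push G p y - push G q y) := by
  funext y
  simp only [push, mul_add, mul_sub, Finset.sum_add_distrib, Finset.mul_sum,
    Finset.sum_sub_distrib]
  congr 1; congr 1 <;> exact Finset.sum_congr rfl fun x _ => by ring

lemma KL_self {X : Type*} [Fintype X] (a : X → ℝ) : KL a a = 0 := by
  unfold KL
  refine Finset.sum_eq_zero fun x _ => ?_
  rcases eq_or_ne (a x) 0 with h | h <;> simp [h, div_self]

lemma deriv_kl {X : Type*} [Fintype X] (a b : X → ℝ) :
    HasDerivAt (fun t : ℝ => KL (fun x => a x + t*(b x - a x)) a)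
      (∑ x, if a x = 0 then 0 else (b x - a x)) 0 := by
  simp only [KL]
  apply HasDerivAt.fun_sum
  intro x _
  rcases eq_or_ne (a x) 0 with h | h
  · have heq : (fun t : ℝ => (a x + t*(b x - a x)) * Real.log ((a x + t*(b x - a x))/a x))
        = fun _ => (0:ℝ) := by
      funext t; simp [h]
    rw [if_pos h, heq]
    exact hasDerivAt_const 0 0
  · rw [if_neg h]
    have hu : HasDerivAt (fun t : ℝ => a x + t*(b x - a x)) (b x - a x) 0 := by
      simpa using ((hasDerivAt_id (0:ℝ)).mul_const (b x - a x)).const_add (a x)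
    have hdiv : HasDerivAt (fun t : ℝ => (a x + t*(b x - a x)) / a x) ((b x - a x)/a x) 0 :=
      hu.div_const _
    have hf0 : (a x + 0*(b x - a x)) / a x = 1 := by field_simp; ring
    have hlog : HasDerivAt (fun t : ℝ => Real.log ((a x + t*(b x - a x)) / a x))
        (((b x - a x)/a x)/1) 0 := by
      have := hdiv.log (by rw [hf0]; norm_num)
      rwa [hf0] at this
    have := hu.fun_mul hlog
    convert this using 1
    · rfl
    rw [hf0]
    simp only [Real.log_one, zero_mul, mul_zero, zero_add, add_zero]
    field_simp

lemma mass_le {X : Type*} [Fintype X] (G : X → X → ℝ) (q p : X → ℝ)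
    (hG : isStoch G) (hq : ∀ x, 0 ≤ q x) (hp : ∀ x, 0 ≤ p x) :
    (∑ y, if push G q y = 0 then push G p y else 0)
      ≤ ∑ x, if q x = 0 then p x else 0 := by
  have key : ∀ y x, (if push G q y = 0 then G y x * p x else 0)
      ≤ (if q x = 0 then G y x * p x else 0) := by
    intro y x
    rcases eq_or_ne (q x) 0 with hx | hx
    · rw [if_pos hx]
      split
      · exact le_refl _
      · exact mul_nonneg (hG.1 y x) (hp x)
    · rw [if_neg hx]
      rcases eq_or_ne (push G q y) 0 with hy | hy
      · rw [if_pos hy]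
        have hGyx : G y x * q x = 0 :=
          (Finset.sum_eq_zero_iff_of_nonneg
            (fun x' _ => mul_nonneg (hG.1 y x') (hq x'))).mp hy x (Finset.mem_univ x)
        have : G y x = 0 := by
          rcases mul_eq_zero.mp hGyx with h | h
          · exact h
          · exact absurd h hx
        simp [this]
      · rw [if_neg hy]
  calc (∑ y, if push G q y = 0 then push G p y else 0)
      = ∑ y, ∑ x, (if push G q y = 0 then G y x * p x else 0) := by
        refine Finset.sum_congr rfl fun y _ => ?_
        split <;> simp [push]
    _ ≤ ∑ y, ∑ x, (if q x = 0 then G y x * p x else 0) :=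
        Finset.sum_le_sum fun y _ => Finset.sum_le_sum fun x _ => key y x
    _ = ∑ x, ∑ y, (if q x = 0 then G y x * p x else 0) := Finset.sum_comm
    _ = ∑ x, if q x = 0 then p x else 0 := by
        refine Finset.sum_congr rfl fun x _ => ?_
        split
        · rw [← Finset.sum_mul, hG.2 x, one_mul]
        · simp

lemma sum_push {X : Type*} [Fintype X] (G : X → X → ℝ) (p : X → ℝ)
    (hG : isStoch G) (hp : ∑ x, p x = 1) : ∑ y, push G p y = 1 := by
  simp only [push]
  rw [Finset.sum_comm]
  calc ∑ x, ∑ y, G y x * p x = ∑ x, (∑ y, G y x) * p x := by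
        refine Finset.sum_congr rfl fun x _ => ?_
        rw [Finset.sum_mul]
    _ = ∑ x, p x := by
        refine Finset.sum_congr rfl fun x _ => ?_
        rw [hG.2 x, one_mul]
    _ = 1 := hp

lemma sum_off_supp {X : Type*} [Fintype X] (a b : X → ℝ)
    (ha : ∑ x, a x = 1) (hb : ∑ x, b x = 1) :
    (∑ x, if a x = 0 then 0 else (b x - a x)) = -(∑ x, if a x = 0 then b x else 0) := by
  have h : ∀ x ∈ Finset.univ (α := X), (if a x = 0 then (0:ℝ) else (b x - a x))
      = (b x - a x) - (if a x = 0 then b x else 0) := by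
    intro x _
    split_ifs with h <;> simp [h]
  rw [Finset.sum_congr rfl h, Finset.sum_sub_distrib, Finset.sum_sub_distrib, ha, hb]
  ring

theorem mismatch_cost_lower_bound_convex {X : Type*} [Fintype X]
    (G : X → X → ℝ) (f : X → ℝ) (V : Set (X → ℝ))
    (hG : isStoch G) (hV : Convex ℝ V) (hVd : ∀ p ∈ V, isDist p)
    (q : X → ℝ) (hqV : q ∈ V)
    (hmin : ∀ r ∈ V, cost G f q ≤ cost G f r)
    (p : X → ℝ) (hpV : p ∈ V) :
    KL p q - KL (push G p) (push G q) ≤ cost G f p - cost G f q := by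
  obtain ⟨hqn, hqs⟩ := hVd q hqV
  obtain ⟨hpn, hps⟩ := hVd p hpV
  have hGqn : ∀ y, 0 ≤ push G q y :=
    fun y => Finset.sum_nonneg fun x _ => mul_nonneg (hG.1 y x) (hqn x)
  have hGpn : ∀ y, 0 ≤ push G p y :=
    fun y => Finset.sum_nonneg fun x _ => mul_nonneg (hG.1 y x) (hpn x)
  -- the two off-support masses
  have hm'le : (∑ y, if push G q y = 0 then push G p y else 0)
      ≤ ∑ x, if q x = 0 then p x else 0 := mass_le G q p hG hqn hpn
  -- segment lies in V
  have hrV : ∀ t : ℝ, 0 ≤ t → t ≤ 1 → (fun x => q x + t*(p x - q x)) ∈ V := by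
    intro t ht0 ht1
    have hmem := hV hqV hpV (by linarith : (0:ℝ) ≤ 1 - t) ht0 (by ring)
    convert hmem using 1
    funext x
    simp only [Pi.add_apply, Pi.smul_apply, smul_eq_mul]
    ring
  -- the exact identity along the segment
  have hid : ∀ t : ℝ, 0 < t → t ≤ 1 →
      cost G f (fun x => q x + t*(p x - q x)) - cost G f q
      = t*(cost G f p - cost G f q - KL p q + KL (push G p) (push G q))
        + t*Real.log t*((∑ x, if q x = 0 then p x else 0)
            - (∑ y, if push G q y = 0 then push G p y else 0))
        + (KL (fun x => q x + t*(p x - q x)) q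
            - KL (push G (fun x => q x + t*(p x - q x))) (push G q)) := by
    intro t ht0 ht1
    have h1 := sum_identity t q p ht0 ht1 hqn hpn
    have h2 := sum_identity t (push G q) (push G p) ht0 ht1 hGqn hGpn
    have h3 : ∑ x, (q x + t*(p x - q x)) * f x
        = ∑ x, q x * f x + t * ((∑ x, p x * f x) - ∑ x, q x * f x) := by
      simp only [← Finset.sum_sub_distrib, Finset.mul_sum, ← Finset.sum_add_distrib]
      exact Finset.sum_congr rfl fun x _ => by ring
    simp only [cost, Ent, push_linear G q p t]
    linear_combination h1 - h2 + h3
  -- derivative of the KL-gap function at 0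
  have hfun : (fun t : ℝ => KL (push G (fun x => q x + t*(p x - q x))) (push G q))
      = (fun t : ℝ => KL (fun y => push G q y + t*(push G p y - push G q y)) (push G q)) := by
    funext t; rw [push_linear]
  have hd1 := deriv_kl q p
  have hd2 := deriv_kl (push G q) (push G p)
  rw [sum_off_supp q p hqs hps] at hd1
  rw [sum_off_supp (push G q) (push G p) (sum_push G q hG hqs) (sum_push G p hG hps)] at hd2
  rw [← hfun] at hd2
  have hg : HasDerivAt (fun t : ℝ => KL (fun x => q x + t*(p x - q x)) q
      - KL (push G (fun x => q x + t*(p x - q x))) (push G q))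
      (-(∑ x, if q x = 0 then p x else 0)
        - -(∑ y, if push G q y = 0 then push G p y else 0)) 0 := hd1.sub hd2
  have hg0 : (KL (fun x => q x + (0:ℝ)*(p x - q x)) q
      - KL (push G (fun x => q x + (0:ℝ)*(p x - q x))) (push G q)) = 0 := by
    have hq0 : (fun x => q x + (0:ℝ)*(p x - q x)) = q := by funext x; ring
    rw [hq0, KL_self, KL_self]; ring
  have hslope := hasDerivAt_iff_tendsto_slope.mp hg
  have htend : Filter.Tendsto (fun t : ℝ => -(slope (fun t : ℝ =>
        KL (fun x => q x + t*(p x - q x)) q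
        - KL (push G (fun x => q x + t*(p x - q x))) (push G q)) 0 t))
      (nhdsWithin 0 (Set.Ioi 0))
      (nhds ((∑ x, if q x = 0 then p x else 0)
        - (∑ y, if push G q y = 0 then push G p y else 0))) := by
    have := (hslope.mono_left (nhdsWithin_mono _ fun x hx => ne_of_gt hx)).neg
    have e : ((∑ x, if q x = 0 then p x else 0)
        - (∑ y, if push G q y = 0 then push G p y else 0))
        = -(-(∑ x, if q x = 0 then p x else 0)
          - -(∑ y, if push G q y = 0 then push G p y else 0)) := by ring
    rw [e]
    exact this
  have hev : ∀ᶠ t in nhdsWithin (0:ℝ) (Set.Ioi 0), -(slope (fun t : ℝ =>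
        KL (fun x => q x + t*(p x - q x)) q
        - KL (push G (fun x => q x + t*(p x - q x))) (push G q)) 0 t)
      ≤ cost G f p - cost G f q - KL p q + KL (push G p) (push G q) := by
    filter_upwards [Ioc_mem_nhdsGT_of_mem (Set.mem_Ico.mpr ⟨le_refl (0:ℝ), zero_lt_one⟩)]
      with t ht
    have hcost := hmin _ (hrV t ht.1.le ht.2)
    have hidt := hid t ht.1 ht.2
    have hlog : Real.log t ≤ 0 := Real.log_nonpos ht.1.le ht.2
    rw [slope_def_field]
    simp only [hg0, sub_zero]
    rw [← neg_div, div_le_iff₀ ht.1]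
    have hz : t*Real.log t*((∑ x, if q x = 0 then p x else 0)
          - (∑ y, if push G q y = 0 then push G p y else 0))
        + t*(-Real.log t)*((∑ x, if q x = 0 then p x else 0)
          - (∑ y, if push G q y = 0 then push G p y else 0)) = 0 := by ring
    have hpos : 0 ≤ t*(-Real.log t)*((∑ x, if q x = 0 then p x else 0)
        - (∑ y, if push G q y = 0 then push G p y else 0)) :=
      mul_nonneg (mul_nonneg ht.1.le (neg_nonneg.2 hlog)) (sub_nonneg.2 hm'le)
    nlinarith [hcost, hidt, hz, hpos]
  have hfinal := le_of_tendsto htend hev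
  linarith [hfinal, sub_nonneg.2 hm'le]
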